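/- arXiv:2405.16429 — 2 statements merged into one kernel-verified Lean document; each statement's English description precedes it below -/
import Mathlib

section
/- For positive reals j, r with j < r, ∫_{-∞}^{∞} t·sin(t·ln(j/r))/(t² + 9/4) dt = -π·(j/r)^{3/2}. -/
open Real Filter MeasureTheory intervalIntegral Set
open scoped FourierTransform Topology

noncomputable section

lemma poly_exp_bound (t : ℝ) (ht : 0 ≤ t) : t * (1 + t^2) * Real.exp (-(3/2) * t) ≤ 9 := by
  have h1 : t/2 + 1 ≤ Real.exp (t/2) := Real.add_one_le_exp (t/2)
  have h2 : Real.exp (t/2) ^ 3 = Real.exp ((3/2) * t) := by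
    rw [← Real.exp_nat_mul]; ring_nf
  have h3 : t * (1 + t^2) ≤ 9 * Real.exp ((3/2) * t) := by
    rw [← h2]
    nlinarith [pow_le_pow_left₀ (by positivity : (0:ℝ) ≤ t/2 + 1) h1 3, sq_nonneg t,
      Real.exp_pos (t/2), sq_nonneg (t-1)]
  have h4 : Real.exp (-(3/2) * t) = (Real.exp ((3/2)*t))⁻¹ := by
    rw [← Real.exp_neg]; ring_nf
  rw [h4, mul_inv_le_iff₀ (Real.exp_pos _)]
  linarith

lemma majorant_integrable : Integrable (fun x : ℝ => 9 * (1 + x^2)⁻¹) :=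
  integrable_inv_one_add_sq.const_mul 9

lemma norm_bound {c : ℂ} (hc : c.re = 3/2) (x : ℝ) (hx : 0 ≤ x) :
    ‖(x : ℂ) * Complex.exp (-(c * x))‖ ≤ 9 * (1 + x^2)⁻¹ := by
  simp only [norm_mul, Complex.norm_exp, Complex.norm_real, Real.norm_eq_abs, abs_of_nonneg hx]
  have h5 : (-(c * (x:ℂ))).re = -(3/2) * x := by
    have h6 : (-(c * (x:ℂ))).re = -(c.re * x) := by simp
    rw [h6, hc]; ring
  rw [h5]
  have hpos : (0:ℝ) < 1 + x ^ 2 := by positivity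
  rw [show (9:ℝ) * (1 + x^2)⁻¹ = 9 / (1 + x^2) by ring, le_div_iff₀ hpos]
  calc x * Real.exp (-(3/2) * x) * (1 + x^2) = x * (1 + x^2) * Real.exp (-(3/2)*x) := by ring
    _ ≤ 9 := poly_exp_bound x hx

lemma moment_aux {c : ℂ} (hc : c.re = 3/2) :
    ∫ x : ℝ in Ioi (0:ℝ), (x : ℂ) * Complex.exp (-(c * x)) = 1 / c ^ 2 := by
  have hc0 : c ≠ 0 := fun h => by simp [h] at hc; norm_num at hc
  set G : ℝ → ℂ := fun x => -(((x:ℂ)/c + 1/c^2) * Complex.exp (-(c * x))) with hGdef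
  have hG : ∀ x : ℝ, HasDerivAt G ((x:ℂ) * Complex.exp (-(c * x))) x := by
    intro x
    have h1 : HasDerivAt (fun z : ℂ => -((z/c + 1/c^2) * Complex.exp (-(c * z))))
        ((x:ℂ) * Complex.exp (-(c * x))) (x:ℂ) := by
      have ha : HasDerivAt (fun z : ℂ => z/c + 1/c^2) (1/c) (x:ℂ) :=
        ((hasDerivAt_id _).div_const c).add_const _
      have hb : HasDerivAt (fun z : ℂ => Complex.exp (-(c * z)))
          (Complex.exp (-(c * (x:ℂ))) * (-c)) (x:ℂ) := by
        have := (((hasDerivAt_id ((x:ℂ))).const_mul c).neg).cexp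
        simpa using this
      have := (ha.fun_mul hb).fun_neg
      refine this.congr_deriv ?_
      field_simp
      ring
    exact h1.comp_ofReal
  have hint : IntegrableOn (fun x : ℝ => (x:ℂ) * Complex.exp (-(c * x))) (Ioi 0) := by
    refine Integrable.mono' (majorant_integrable.integrableOn) ?_ ?_
    · exact (Complex.continuous_ofReal.mul (Complex.continuous_exp.comp
        ((continuous_const.mul Complex.continuous_ofReal).neg))).aestronglyMeasurable
    · filter_upwards [self_mem_ae_restrict measurableSet_Ioi] with x hx
      exact norm_bound hc x (le_of_lt hx)
  have hlim : Tendsto G atTop (𝓝 0) := by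
    refine squeeze_zero_norm' (a := fun x => ‖1/c‖ * (x * Real.exp (-x)) + ‖1/c^2‖ * Real.exp (-x)) ?_ ?_
    · filter_upwards [eventually_ge_atTop (0:ℝ)] with x hx
      have h1 : ‖G x‖ = ‖(x:ℂ)/c + 1/c^2‖ * Real.exp (-(3/2) * x) := by
        rw [hGdef]
        simp only [norm_neg, norm_mul, Complex.norm_exp]
        congr 2
        have : (-(c * (x:ℂ))).re = -(c.re * x) := by simp
        rw [this, hc]; ring
      rw [h1]
      have h2 : ‖(x:ℂ)/c + 1/c^2‖ ≤ ‖1/c‖ * x + ‖1/c^2‖ := by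
        refine (norm_add_le _ _).trans ?_
        gcongr
        rw [div_eq_mul_inv, one_div, mul_comm]
        simp only [norm_mul, Complex.norm_real, Real.norm_eq_abs, abs_of_nonneg hx, norm_inv]
        exact le_refl _
      have h3 : Real.exp (-(3/2) * x) ≤ Real.exp (-x) := by
        apply Real.exp_le_exp.2; linarith
      calc ‖(x:ℂ)/c + 1/c^2‖ * Real.exp (-(3/2)*x)
          ≤ (‖1/c‖ * x + ‖1/c^2‖) * Real.exp (-x) := by
            apply mul_le_mul h2 h3 (Real.exp_pos _).le (by positivity)
        _ = ‖1/c‖ * (x * Real.exp (-x)) + ‖1/c^2‖ * Real.exp (-x) := by ring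
    · have t1 : Tendsto (fun x : ℝ => x * Real.exp (-x)) atTop (𝓝 0) := by
        simpa using Real.tendsto_pow_mul_exp_neg_atTop_nhds_zero 1
      have t2 : Tendsto (fun x : ℝ => Real.exp (-x)) atTop (𝓝 0) :=
        Real.tendsto_exp_neg_atTop_nhds_zero
      have := (t1.const_mul ‖1/c‖).add (t2.const_mul ‖1/c^2‖)
      rw [mul_zero, mul_zero, add_zero] at this
      exact this
  have := integral_Ioi_of_hasDerivAt_of_tendsto' (fun x _ => hG x) hint hlim
  rw [this]
  simp only [hGdef, Complex.ofReal_zero, mul_zero, neg_zero, Complex.exp_zero, zero_div, mul_one,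
    zero_add, zero_sub, neg_neg]

def wfun : ℝ → ℂ := fun x => ((|x| * Real.exp (-(3/2) * |x|) : ℝ) : ℂ)

lemma wfun_continuous : Continuous wfun := by
  apply Complex.continuous_ofReal.comp
  exact continuous_abs.mul ((continuous_const.mul continuous_abs).rexp)

lemma wfun_norm (x : ℝ) : ‖wfun x‖ = |x| * Real.exp (-(3/2) * |x|) := by
  rw [wfun, Complex.norm_real, Real.norm_eq_abs, abs_of_nonneg (by positivity)]

lemma wfun_integrable : Integrable wfun := by
  refine Integrable.mono' majorant_integrable wfun_continuous.aestronglyMeasurable ?_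
  filter_upwards with x
  rw [wfun_norm]
  have hpos : (0:ℝ) < 1 + x ^ 2 := by positivity
  rw [show (9:ℝ) * (1 + x^2)⁻¹ = 9 / (1 + x^2) by ring, le_div_iff₀ hpos]
  calc |x| * Real.exp (-(3/2) * |x|) * (1 + x^2) = |x| * (1 + |x|^2) * Real.exp (-(3/2)*|x|) := by
        rw [sq_abs]; ring
    _ ≤ 9 := poly_exp_bound |x| (abs_nonneg x)

lemma fourier_wfun (ξ : ℝ) :
    𝓕 wfun ξ = ((2 * (9/4 - (2*π*ξ)^2) / ((9/4 + (2*π*ξ)^2)^2) : ℝ) : ℂ) := by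
  set s : ℝ := 2*π*ξ with hs
  set cp : ℂ := (3/2 : ℂ) + s * Complex.I with hcp
  set cm : ℂ := (3/2 : ℂ) - s * Complex.I with hcm
  have hcpre : cp.re = 3/2 := by simp [hcp]
  have hcmre : cm.re = 3/2 := by simp [hcm]
  rw [Real.fourier_real_eq_integral_exp_smul]
  simp only [smul_eq_mul]
  set f : ℝ → ℂ := fun v => Complex.exp (↑(-2 * π * v * ξ) * Complex.I) * wfun v with hf
  have hfi : Integrable f := by
    refine Integrable.mono' wfun_integrable.norm ?_ ?_
    · exact (Complex.continuous_exp.comp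
        ((Complex.continuous_ofReal.comp (by continuity)).mul continuous_const)).mul
        wfun_continuous |>.aestronglyMeasurable
    · filter_upwards with x
      rw [hf, norm_mul]
      simp only [Complex.norm_exp]
      simp [Complex.mul_re]
  rw [← integral_Iic_add_Ioi (b := (0:ℝ)) hfi.integrableOn hfi.integrableOn]
  have hIoi : ∫ v in Ioi (0:ℝ), f v = 1 / cp ^ 2 := by
    rw [← moment_aux (c := cp) hcpre]
    refine setIntegral_congr_fun measurableSet_Ioi (fun v hv => ?_)
    rw [hf]
    simp only [wfun, abs_of_pos (mem_Ioi.1 hv)]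
    push_cast
    rw [show Complex.exp (-2*(π:ℂ)*v*ξ*Complex.I) * ((v:ℂ) * Complex.exp (-(3/2)*(v:ℂ)))
        = (v:ℂ) * Complex.exp (-2*(π:ℂ)*v*ξ*Complex.I + -(3/2)*(v:ℂ)) by
      rw [Complex.exp_add]; ring]
    congr 1
    rw [hcp]
    push_cast [hs]
    ring
  have hIic : ∫ v in Iic (0:ℝ), f v = 1 / cm ^ 2 := by
    have := integral_comp_neg_Ioi (0:ℝ) f
    rw [neg_zero] at this
    rw [← this, ← moment_aux (c := cm) hcmre]
    refine setIntegral_congr_fun measurableSet_Ioi (fun v hv => ?_)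
    rw [hf]
    simp only [wfun, abs_neg, abs_of_pos (mem_Ioi.1 hv)]
    push_cast
    rw [show Complex.exp (-2*(π:ℂ)*(-(v:ℂ))*ξ*Complex.I) * ((v:ℂ) * Complex.exp (-(3/2)*(v:ℂ)))
        = (v:ℂ) * Complex.exp (-2*(π:ℂ)*(-(v:ℂ))*ξ*Complex.I + -(3/2)*(v:ℂ)) by
      rw [Complex.exp_add]; ring]
    congr 1
    rw [hcm]
    push_cast [hs]
    ring
  rw [hIic, hIoi]
  have hcp0 : cp ≠ 0 := fun h => by rw [h] at hcpre; norm_num at hcpre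
  have hcm0 : cm ≠ 0 := fun h => by rw [h] at hcmre; norm_num at hcmre
  have hden : ((9:ℝ)/4 + s^2) ≠ 0 := by positivity
  have h1 : cp * cm = (((9:ℝ)/4 + s^2 : ℝ) : ℂ) := by
    rw [hcp, hcm]
    push_cast
    ring_nf
    rw [Complex.I_sq]
    ring
  have h2 : cm^2 + cp^2 = ((2*((9:ℝ)/4 - s^2) : ℝ) : ℂ) := by
    rw [hcp, hcm]
    push_cast
    ring_nf
    rw [Complex.I_sq]
    ring
  have h3 : 1/cm^2 + 1/cp^2 = (cm^2 + cp^2)/(cp*cm)^2 := by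
    rw [mul_pow, div_add_div _ _ (pow_ne_zero 2 hcm0) (pow_ne_zero 2 hcp0), one_mul, mul_one]
    rw [mul_comm (cm^2) (cp^2)]
    ring_nf
  rw [h3, h1, h2]
  push_cast
  ring

lemma fourier_wfun_integrable : Integrable (𝓕 wfun) := by
  refine Integrable.mono' majorant_integrable ?_ ?_
  · exact (VectorFourier.fourierIntegral_continuous Real.continuous_fourierChar
      (by exact continuous_inner) wfun_integrable).aestronglyMeasurable
  · filter_upwards with ξ
    rw [fourier_wfun]
    rw [Complex.norm_real, Real.norm_eq_abs]
    have hden : (0:ℝ) < 9/4 + (2*π*ξ)^2 := by positivity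
    have hπ2 : (9:ℝ) ≤ π^2 := by nlinarith [Real.pi_gt_three]
    have h19 : (1:ℝ) + ξ^2 ≤ 9/4 + (2*π*ξ)^2 := by
      nlinarith [mul_nonneg (sub_nonneg.2 hπ2) (sq_nonneg ξ)]
    have hposx : (0:ℝ) < 1 + ξ^2 := by positivity
    calc |2 * (9/4 - (2*π*ξ)^2) / ((9/4 + (2*π*ξ)^2)^2)|
        = |2 * (9/4 - (2*π*ξ)^2)| / (9/4 + (2*π*ξ)^2)^2 := by
          rw [abs_div, abs_of_pos (by positivity : (0:ℝ) < (9/4 + (2*π*ξ)^2)^2)]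
      _ ≤ (2 * (9/4 + (2*π*ξ)^2)) / (9/4 + (2*π*ξ)^2)^2 := by
          gcongr
          rw [abs_mul, abs_two]
          gcongr
          rw [abs_le]
          constructor <;> nlinarith [sq_nonneg (2*π*ξ)]
      _ = 2 / (9/4 + (2*π*ξ)^2) := by
          field_simp
      _ ≤ 9 / (1 + ξ^2) := div_le_div₀ (by norm_num) (by norm_num) hposx h19
      _ = 9 * (1 + ξ^2)⁻¹ := by ring

lemma inversion_wfun (aR : ℝ) :
    ∫ ξ : ℝ, Complex.exp (↑(2 * π * ξ * aR) * Complex.I) * 𝓕 wfun ξ = wfun aR := by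
  have h := wfun_integrable.fourierInv_fourier_eq fourier_wfun_integrable
    (wfun_continuous.continuousAt (x := aR))
  rw [← h, Real.fourierInv_eq_fourier_neg,
    Real.fourier_real_eq_integral_exp_smul]
  refine integral_congr_ae (Eventually.of_forall fun ξ => ?_)
  simp only [smul_eq_mul]
  congr 2
  push_cast
  ring

lemma ratio_bound (t : ℝ) : |2 * (9/4 - t^2) / ((9/4 + t^2)^2)| ≤ 9 * (1 + t^2)⁻¹ := by
  have hden : (0:ℝ) < 9/4 + t^2 := by positivity
  have h19 : (1:ℝ) + t^2 ≤ 9/4 + t^2 := by linarith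
  have hposx : (0:ℝ) < 1 + t^2 := by positivity
  calc |2 * (9/4 - t^2) / ((9/4 + t^2)^2)|
      = |2 * (9/4 - t^2)| / (9/4 + t^2)^2 := by
        rw [abs_div, abs_of_pos (by positivity : (0:ℝ) < (9/4 + t^2)^2)]
    _ ≤ (2 * (9/4 + t^2)) / (9/4 + t^2)^2 := by
        gcongr
        rw [abs_mul, abs_two]
        gcongr
        rw [abs_le]
        constructor <;> nlinarith [sq_nonneg t]
    _ = 2 / (9/4 + t^2) := by
        field_simp
    _ ≤ 9 / (1 + t^2) := div_le_div₀ (by norm_num) (by norm_num) hposx h19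
    _ = 9 * (1 + t^2)⁻¹ := by ring

def gfun (aR : ℝ) : ℝ → ℂ := fun t =>
  Complex.exp (↑(t * aR) * Complex.I) * ((2 * (9/4 - t^2) / ((9/4 + t^2)^2) : ℝ) : ℂ)

lemma gfun_integrable (aR : ℝ) : Integrable (gfun aR) := by
  refine Integrable.mono' majorant_integrable ?_ ?_
  · apply Continuous.aestronglyMeasurable
    apply Continuous.mul
    · exact Complex.continuous_exp.comp ((Complex.continuous_ofReal.comp
        (continuous_id.mul continuous_const)).mul continuous_const)
    · apply Complex.continuous_ofReal.comp
      apply Continuous.div (by continuity) (by continuity)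
      intro t
      positivity
  · filter_upwards with t
    rw [gfun, norm_mul, Complex.norm_exp]
    have hre : (((t*aR : ℝ) : ℂ) * Complex.I).re = 0 := by simp
    rw [hre, Real.exp_zero, one_mul, Complex.norm_real, Real.norm_eq_abs]
    exact ratio_bound t

lemma gfun_integral (aR : ℝ) :
    ∫ t : ℝ, gfun aR t = (2 * π : ℝ) • ((|aR| * Real.exp (-(3/2) * |aR|) : ℝ) : ℂ) := by
  have hcomp : (fun ξ : ℝ => Complex.exp (↑(2 * π * ξ * aR) * Complex.I) * 𝓕 wfun ξ)
      = fun ξ => gfun aR (2 * π * ξ) := by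
    funext ξ
    rw [gfun, fourier_wfun]
  have h1 := inversion_wfun aR
  rw [hcomp] at h1
  rw [MeasureTheory.Measure.integral_comp_mul_left (gfun aR) (2*π)] at h1
  rw [abs_of_pos (by positivity : (0:ℝ) < (2*π)⁻¹)] at h1
  have h2π : (2*π : ℝ) ≠ 0 := by positivity
  show ∫ t : ℝ, gfun aR t = (2*π : ℝ) • wfun aR
  rw [← h1, smul_smul, mul_inv_cancel₀ h2π, one_smul]

lemma key_integral (aR : ℝ) :
    ∫ t : ℝ, Real.cos (t * aR) * (2 * (9/4 - t^2) / ((9/4 + t^2)^2))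
      = 2 * π * (|aR| * Real.exp (-(3/2) * |aR|)) := by
  have h1 : ∀ t : ℝ, Real.cos (t * aR) * (2 * (9/4 - t^2) / ((9/4 + t^2)^2))
      = (gfun aR t).re := by
    intro t
    rw [gfun]
    rw [show Complex.exp (↑(t*aR) * Complex.I) * ((2*(9/4 - t^2)/((9/4+t^2)^2) : ℝ) : ℂ)
        = ((2*(9/4 - t^2)/((9/4+t^2)^2) : ℝ) : ℂ) * Complex.exp (↑(t*aR)*Complex.I) from
      mul_comm _ _]
    rw [Complex.re_ofReal_mul, Complex.exp_ofReal_mul_I_re]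
    ring
  simp_rw [h1]
  have h2 := integral_re (gfun_integrable aR)
  simp only [RCLike.re_eq_complex_re] at h2
  rw [h2, gfun_integral, Complex.smul_re, Complex.ofReal_re, smul_eq_mul]

lemma gcos_integrable (aR : ℝ) :
    Integrable (fun t : ℝ => Real.cos (t * aR) * (2 * (9/4 - t^2) / ((9/4 + t^2)^2))) := by
  refine Integrable.mono' majorant_integrable ?_ ?_
  · apply Continuous.aestronglyMeasurable
    apply Continuous.mul
    · exact Real.continuous_cos.comp (continuous_id.mul continuous_const)
    · apply Continuous.div (by continuity) (by continuity)
      intro t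
      positivity
  · filter_upwards with t
    rw [Real.norm_eq_abs, abs_mul]
    calc |Real.cos (t * aR)| * |2 * (9/4 - t^2) / ((9/4 + t^2)^2)|
        ≤ 1 * |2 * (9/4 - t^2) / ((9/4 + t^2)^2)| := by
          gcongr
          exact Real.abs_cos_le_one _
      _ = |2 * (9/4 - t^2) / ((9/4 + t^2)^2)| := one_mul _
      _ ≤ 9 * (1 + t^2)⁻¹ := ratio_bound t

theorem stmt_4 (j r : ℝ) (hj : 0 < j) (hjr : j < r) :
    Tendsto (fun T : ℝ =>
        ∫ t in (-T)..T, t * Real.sin (t * Real.log (j / r)) / (t ^ 2 + 9 / 4))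
      atTop (nhds (-(Real.pi * (j / r) ^ ((3 / 2 : ℝ))))) := by
  set a : ℝ := Real.log (j / r) with ha
  have hr : 0 < r := hj.trans hjr
  have hjrpos : 0 < j / r := div_pos hj hr
  have haneg : a < 0 := Real.log_neg hjrpos ((div_lt_one hr).2 hjr)
  have ha0 : a ≠ 0 := haneg.ne
  set F : ℝ → ℝ := fun t => -(t * Real.cos (t * a) / (a * (t^2 + 9/4))) with hF
  set g : ℝ → ℝ := fun t => Real.cos (t * a) * (2 * (9/4 - t^2) / ((9/4 + t^2)^2)) with hg
  set f : ℝ → ℝ := fun t => t * Real.sin (t * a) / (t^2 + 9/4) with hf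
  have hFderiv : ∀ t : ℝ, HasDerivAt F (f t - (1/(2*a)) * g t) t := by
    intro t
    have hd : (0:ℝ) < t^2 + 9/4 := by positivity
    have h1 : HasDerivAt (fun t : ℝ => t * Real.cos (t * a))
        (Real.cos (t * a) + t * (-Real.sin (t * a) * a)) t := by
      have hc : HasDerivAt (fun t : ℝ => Real.cos (t * a)) (-Real.sin (t * a) * a) t := by
        simpa using ((hasDerivAt_id t).mul_const a).cos
      simpa using (hasDerivAt_id' t).fun_mul hc
    have h2 : HasDerivAt (fun t : ℝ => a * (t^2 + 9/4)) (a * (2 * t)) t := by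
      have := ((hasDerivAt_pow 2 t).add_const (9/4 : ℝ)).const_mul a
      simpa using this
    have h3 := (h1.fun_div h2 (by positivity : a * (t^2 + 9/4) ≠ 0)).fun_neg
    refine h3.congr_deriv ?_
    rw [hf, hg]
    field_simp
    ring
  have hsplit : ∀ T : ℝ, ∫ t in (-T)..T, f t
      = (F T - F (-T)) + (1/(2*a)) * ∫ t in (-T)..T, g t := by
    intro T
    have hck : Continuous g := by
      rw [hg]
      apply Continuous.mul
      · exact Real.continuous_cos.comp (continuous_id.mul continuous_const)
      · exact Continuous.div
          (continuous_const.mul (continuous_const.sub (continuous_pow 2)))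
          ((continuous_const.add (continuous_pow 2)).pow 2)
          (fun t => by positivity)
    have hcf : Continuous f := by
      rw [hf]
      exact Continuous.div
        (continuous_id.mul (Real.continuous_sin.comp (continuous_id.mul continuous_const)))
        ((continuous_pow 2).add continuous_const)
        (fun t => by positivity)
    have hFT := intervalIntegral.integral_eq_sub_of_hasDerivAt
      (f := F) (a := -T) (b := T) (fun t _ => hFderiv t)
      ((hcf.sub (continuous_const.mul hck)).intervalIntegrable _ _)
    rw [intervalIntegral.integral_sub (hcf.intervalIntegrable _ _)
      ((continuous_const.fun_mul hck).intervalIntegrable _ _),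
      intervalIntegral.integral_const_mul] at hFT
    linarith [hFT]
  have hbound : Tendsto (fun T : ℝ => F T - F (-T)) atTop (𝓝 0) := by
    refine squeeze_zero_norm' (a := fun T : ℝ => (2/|a|) * T⁻¹) ?_ ?_
    · filter_upwards [eventually_ge_atTop (1:ℝ)] with T hT
      have hT0 : (0:ℝ) < T := lt_of_lt_of_le one_pos hT
      have habs : (0:ℝ) < |a| := abs_pos.2 ha0
      have hFb : ∀ s : ℝ, |s| = T → |F s| ≤ 1/(|a| * T) := by
        intro s hs
        rw [hF]
        rw [abs_neg, abs_div, abs_mul, abs_mul]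
        have hs2 : s^2 = T^2 := by rw [← sq_abs, hs]
        rw [hs2, hs]
        have hden : |a| * |T^2 + 9/4| = |a| * (T^2 + 9/4) := by
          rw [abs_of_pos (by positivity : (0:ℝ) < T^2 + 9/4)]
        rw [hden]
        calc T * |Real.cos (s * a)| / (|a| * (T^2 + 9/4))
            ≤ T * 1 / (|a| * (T*T)) := by
              gcongr
              · exact Real.abs_cos_le_one _
              · nlinarith
          _ = 1/(|a| * T) := by field_simp
      calc ‖F T - F (-T)‖ ≤ |F T| + |F (-T)| := abs_sub _ _
        _ ≤ 1/(|a| * T) + 1/(|a| * T) := by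
            gcongr
            · exact hFb T (abs_of_pos hT0)
            · exact hFb (-T) (by rw [abs_neg, abs_of_pos hT0])
        _ = (2/|a|) * T⁻¹ := by field_simp; ring
    · have : Tendsto (fun T : ℝ => T⁻¹) atTop (𝓝 0) := tendsto_inv_atTop_zero
      have h2 := this.const_mul (2/|a|)
      simpa using h2
  have hgl : Tendsto (fun T : ℝ => (1/(2*a)) * ∫ t in (-T)..T, g t) atTop
      (𝓝 ((1/(2*a)) * (2 * π * (|a| * Real.exp (-(3/2) * |a|))))) := by
    have h1 : Tendsto (fun T : ℝ => ∫ t in (-T)..T, g t) atTop (𝓝 (∫ t : ℝ, g t)) :=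
      intervalIntegral_tendsto_integral (gcos_integrable a) tendsto_neg_atTop_atBot tendsto_id
    rw [hg] at h1 ⊢
    rw [key_integral a] at h1
    exact h1.const_mul _
  have hfinal := hbound.add hgl
  rw [zero_add] at hfinal
  have heq : (1/(2*a)) * (2 * π * (|a| * Real.exp (-(3/2) * |a|)))
      = -(π * (j / r) ^ ((3 / 2 : ℝ))) := by
    rw [abs_of_neg haneg]
    rw [Real.rpow_def_of_pos hjrpos, ← ha]
    field_simp
  rw [heq] at hfinal
  refine hfinal.congr (fun T => ?_)
  rw [← hsplit T]
end
end

section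
/- For real σ > 1 and positive real r, with j a positive integer: ∫_{-∞}^{∞} [σ·cos(t·ln(r/j)) + t·sin(t·ln(r/j))]/(σ² + t²) dt equals 2π·(r/j)^{-σ} if j < r, equals 0 if j > r, and equals π if j = r. -/
open Real Filter MeasureTheory intervalIntegral
open Complex
open scoped FourierTransform Topology

noncomputable def hfun (σ s : ℝ) : ℂ := ((max s 0) * Real.exp (-σ * max s 0) : ℝ)

lemma hfun_cont (σ : ℝ) : Continuous (hfun σ) := by
  apply Complex.continuous_ofReal.comp; fun_prop

lemma hfun_zero (σ : ℝ) {s : ℝ} (hs : s ≤ 0) : hfun σ s = 0 := by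
  simp [hfun, max_eq_right hs]

lemma cne (σ : ℝ) (hσ : 0 < σ) (b : ℝ) : ((σ : ℂ) + b * Complex.I) ≠ 0 := by
  intro h
  have := congrArg Complex.re h
  simp at this
  exact hσ.ne' this

lemma norm_c_ge (σ b : ℝ) (hσ : 0 < σ) : σ ≤ ‖(σ : ℂ) + b * Complex.I‖ := by
  have := Complex.abs_re_le_norm ((σ : ℂ) + b * Complex.I)
  simpa [abs_of_pos hσ] using this

lemma norm_exp_neg_mul (c : ℂ) (s : ℝ) :
    ‖Complex.exp (-(c * s))‖ = Real.exp (-(c.re * s)) := by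
  rw [Complex.norm_exp]
  congr 1
  simp

lemma integrableOn_mul_exp (σ : ℝ) (hσ : 0 < σ) :
    IntegrableOn (fun s : ℝ => s * Real.exp (-σ * s)) (Set.Ioi 0) := by
  have := integrableOn_rpow_mul_exp_neg_mul_rpow (p := 1) (s := 1) (b := σ)
    (by norm_num) one_pos hσ
  refine this.congr_fun (fun x hx => ?_) measurableSet_Ioi
  simp [Real.rpow_one]

-- antiderivative computation : ∫_{Ioi 0} s e^{-cs} = 1/c²
lemma key_int (σ b : ℝ) (hσ : 1 ≤ σ) :
    ∫ s : ℝ in Set.Ioi 0, (s : ℂ) * Complex.exp (-(((σ : ℂ) + b * Complex.I) * s))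
      = (((σ : ℂ) + b * Complex.I)⁻¹) ^ 2 := by
  have hσ0 : (0:ℝ) < σ := lt_of_lt_of_le one_pos hσ
  set c : ℂ := (σ : ℂ) + b * Complex.I with hc
  have hcne : c ≠ 0 := cne σ hσ0 b
  have hcre : c.re = σ := by simp [hc]
  set F : ℝ → ℂ := fun s => -((s : ℂ) / c + 1 / c ^ 2) * Complex.exp (-(c * s)) with hF
  have hderiv : ∀ s : ℝ, HasDerivAt F ((s : ℂ) * Complex.exp (-(c * s))) s := by
    intro s
    have h1 : HasDerivAt (fun z : ℂ => -(z / c + 1 / c ^ 2)) (-(1/c)) (s : ℂ) := by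
      have := (((hasDerivAt_id (s : ℂ)).div_const c).add_const (1 / c ^ 2)).neg
      exact this
    have h2 : HasDerivAt (fun z : ℂ => Complex.exp (-(c * z))) (-c * Complex.exp (-(c * s))) (s : ℂ) := by
      have := (((hasDerivAt_id (s : ℂ)).const_mul c).neg).cexp
      simp only [id_eq] at this
      refine this.congr_deriv (Eq.symm ?_)
      simp only [Pi.neg_apply]
      ring
    have := (h1.comp_ofReal).mul (h2.comp_ofReal)
    refine this.congr_deriv (Eq.symm ?_)
    field_simp
    ring
  have hnormF : ∀ s : ℝ, 0 ≤ s → ‖F s‖ ≤ (s + ‖(1:ℂ)/c^2‖) * Real.exp (-s) := by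
    intro s hs
    have h1 : ‖Complex.exp (-(c * s))‖ = Real.exp (-(σ * s)) := by
      rw [norm_exp_neg_mul, hcre]
    have hnc : 1 ≤ ‖c‖ := le_trans hσ (norm_c_ge σ b hσ0)
    have h2 : ‖(s : ℂ) / c + 1 / c ^ 2‖ ≤ s + ‖(1:ℂ)/c^2‖ := by
      refine (norm_add_le _ _).trans ?_
      gcongr
      rw [norm_div]
      simp only [Complex.norm_real, Real.norm_eq_abs, _root_.abs_of_nonneg hs]
      calc s / ‖c‖ ≤ s / 1 := by gcongr
        _ = s := div_one s
    have h3 : Real.exp (-(σ * s)) ≤ Real.exp (-s) := by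
      apply Real.exp_le_exp.2
      nlinarith
    calc ‖F s‖ = ‖(s:ℂ)/c + 1/c^2‖ * Real.exp (-(σ * s)) := by
          rw [hF]; simp only [norm_mul, norm_neg, h1]
      _ ≤ (s + ‖(1:ℂ)/c^2‖) * Real.exp (-s) :=
          mul_le_mul h2 h3 (Real.exp_nonneg _) (by positivity)
  have htendB : Tendsto (fun s : ℝ => (s + ‖(1:ℂ)/c^2‖) * Real.exp (-s)) atTop (𝓝 0) := by
    have h1 : Tendsto (fun s : ℝ => s * Real.exp (-s)) atTop (𝓝 0) := by
      simpa [pow_one] using tendsto_pow_mul_exp_neg_atTop_nhds_zero 1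
    have h2 : Tendsto (fun s : ℝ => ‖(1:ℂ)/c^2‖ * Real.exp (-s)) atTop (𝓝 0) := by
      have := (Real.tendsto_exp_neg_atTop_nhds_zero).const_mul ‖(1:ℂ)/c^2‖
      simpa using this
      
    have := h1.add h2
    simpa [add_mul] using this
  have htend : Tendsto F atTop (𝓝 0) := by
    apply squeeze_zero_norm' _ htendB
    filter_upwards [eventually_ge_atTop (0:ℝ)] with s hs using hnormF s hs
  have hint : IntegrableOn (fun s : ℝ => (s : ℂ) * Complex.exp (-(c * s))) (Set.Ioi 0) := by
    refine (integrableOn_mul_exp σ hσ0).mono' ?_ ?_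
    · apply Continuous.aestronglyMeasurable
      fun_prop
    · refine (ae_restrict_iff' measurableSet_Ioi).2 (Filter.Eventually.of_forall fun s hs => ?_)
      rw [norm_mul, norm_exp_neg_mul, hcre]
      simp only [Complex.norm_real, Real.norm_eq_abs, _root_.abs_of_nonneg (le_of_lt (Set.mem_Ioi.mp hs))]
      rw [neg_mul]
  have := MeasureTheory.integral_Ioi_of_hasDerivAt_of_tendsto'
    (f := F) (f' := fun s : ℝ => (s : ℂ) * Complex.exp (-(c * s))) (a := 0)
    (fun x _ => hderiv x) hint htend
  rw [this]
  have hF0 : F 0 = -(1/c^2) := by simp [hF]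
  rw [hF0]
  rw [inv_pow]
  ring

lemma hfun_integrable (σ : ℝ) (hσ : 0 < σ) : Integrable (hfun σ) := by
  rw [← integrableOn_univ, ← Set.Iic_union_Ioi (a := (0:ℝ))]
  apply IntegrableOn.union
  · exact (integrable_zero _ _ _).integrableOn.congr_fun
      (fun s hs => (hfun_zero σ hs).symm) measurableSet_Iic
  · refine IntegrableOn.congr_fun ((integrableOn_mul_exp σ hσ).ofReal (𝕜 := ℂ))
      (fun s hs => ?_) measurableSet_Ioi
    simp [hfun, max_eq_left (le_of_lt (Set.mem_Ioi.mp hs))]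

lemma ft_hfun (σ : ℝ) (hσ : 1 ≤ σ) (ξ : ℝ) :
    𝓕 (hfun σ) ξ = (((σ:ℂ) + ((2*π*ξ : ℝ) : ℂ) * Complex.I)⁻¹)^2 := by
  have hσ0 : (0:ℝ) < σ := lt_of_lt_of_le one_pos hσ
  rw [Real.fourier_real_eq_integral_exp_smul, ← key_int σ (2*π*ξ) hσ]
  rw [← setIntegral_eq_integral_of_forall_compl_eq_zero
      (s := Set.Ioi 0) (f := fun v : ℝ => Complex.exp (↑(-2 * π * v * ξ) * Complex.I) • hfun σ v)
      (fun x hx => by simp [hfun_zero σ (by simpa using hx)])]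
  refine setIntegral_congr_fun measurableSet_Ioi (fun v hv => ?_)
  have hv0 : (0:ℝ) < v := hv
  rw [hfun, max_eq_left (le_of_lt hv0), smul_eq_mul]
  push_cast
  rw [mul_comm (Complex.exp _) _, mul_assoc, ← Complex.exp_add]
  congr 1
  ring

lemma ft_hfun_integrable (σ : ℝ) (hσ : 1 ≤ σ) : Integrable (𝓕 (hfun σ)) := by
  have hσ0 : (0:ℝ) < σ := lt_of_lt_of_le one_pos hσ
  have heq : 𝓕 (hfun σ)
      = fun ξ : ℝ => (((σ:ℂ) + ((2*π*ξ : ℝ) : ℂ) * Complex.I)⁻¹)^2 :=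
    funext (ft_hfun σ hσ)
  rw [heq]
  refine integrable_inv_one_add_sq.mono' ?_ ?_
  · apply Continuous.aestronglyMeasurable
    apply Continuous.pow
    apply Continuous.inv₀
    · fun_prop
    · exact fun ξ => cne σ hσ0 (2*π*ξ)
  · refine Filter.Eventually.of_forall (fun ξ => ?_)
    rw [norm_pow, norm_inv]
    have h1 : ‖(σ:ℂ) + ((2*π*ξ : ℝ) : ℂ) * Complex.I‖^2 = σ^2 + (2*π*ξ)^2 := by
      rw [Complex.sq_norm, Complex.normSq_add_mul_I]
    have h2 : (1 : ℝ) + ξ^2 ≤ σ^2 + (2*π*ξ)^2 := by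
      have hπ : (1:ℝ) ≤ π := by linarith [Real.pi_gt_three]
      have hπ2 : (1:ℝ) ≤ π^2 := by nlinarith
      have : ξ^2 ≤ (2*π*ξ)^2 := by nlinarith [sq_nonneg ξ]
      nlinarith
    rw [inv_pow, h1]
    exact inv_anti₀ (by positivity) h2

lemma fourier_key (σ a : ℝ) (hσ : 1 ≤ σ) :
    ∫ t : ℝ, Complex.exp ((t : ℂ) * (a * Complex.I)) / ((σ:ℂ) + t * Complex.I)^2
      = 2 * π * hfun σ a := by
  have hσ0 : (0:ℝ) < σ := lt_of_lt_of_le one_pos hσ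
  set ψ : ℝ → ℂ := fun t => Complex.exp ((t : ℂ) * (a * Complex.I)) / ((σ:ℂ) + t * Complex.I)^2
    with hψ
  have hinv : 𝓕⁻ (𝓕 (hfun σ)) a = hfun σ a :=
    congrFun ((hfun_cont σ).fourierInv_fourier_eq (hfun_integrable σ hσ0) (ft_hfun_integrable σ hσ)) a
  have hsub : (∫ x : ℝ, ψ (2 * π * x)) = |(2*π)⁻¹| • ∫ t : ℝ, ψ t :=
    MeasureTheory.Measure.integral_comp_mul_left ψ (2*π)
  have hval : (∫ x : ℝ, ψ (2 * π * x)) = hfun σ a := by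
    rw [← hinv, Real.fourierInv_eq']
    refine integral_congr_ae (Filter.Eventually.of_forall (fun ξ => ?_))
    have hexp : ((2*π*ξ : ℝ) : ℂ) * ((a:ℂ) * Complex.I)
        = ((2 * π * (inner ℝ ξ a : ℝ) : ℝ) : ℂ) * Complex.I := by
      have h0 : (inner ℝ ξ a : ℝ) = ξ * a := by rw [RCLike.inner_apply, conj_trivial, mul_comm]
      rw [h0]; push_cast; ring
    show ψ (2 * π * ξ) = _ • 𝓕 (hfun σ) ξ
    rw [ft_hfun σ hσ, smul_eq_mul, hψ]
    simp only []
    rw [hexp, div_eq_mul_inv, inv_pow]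
  have h2π : |(2*π)⁻¹| = (2*π)⁻¹ := abs_of_pos (by positivity)
  rw [hval, h2π] at hsub
  have : (2*π : ℝ) • ((2*π:ℝ)⁻¹ • ∫ t : ℝ, ψ t) = (2*π:ℝ) • (hfun σ a : ℂ) := by
    rw [← hsub]
  rw [smul_inv_smul₀ (by positivity : (2*π:ℝ) ≠ 0)] at this
  rw [this]
  rw [Complex.real_smul]
  push_cast
  ring

lemma aux_re (σ a t : ℝ) :
    (Complex.exp ((t : ℂ) * (a * Complex.I)) / ((σ:ℂ) + t * Complex.I)).re
      = (σ * Real.cos (t * a) + t * Real.sin (t * a)) / (σ^2 + t^2) := by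
  have h1 : (t : ℂ) * (a * Complex.I) = ((t * a : ℝ) : ℂ) * Complex.I := by push_cast; ring
  rw [h1, Complex.div_re]
  have h2 : Complex.normSq ((σ:ℂ) + t * Complex.I) = σ^2 + t^2 := Complex.normSq_add_mul_I σ t
  rw [h2]
  simp only [Complex.exp_ofReal_mul_I_re, Complex.exp_ofReal_mul_I_im,
    Complex.add_re, Complex.ofReal_re, Complex.mul_re, Complex.mul_im, Complex.I_re, Complex.I_im,
    Complex.ofReal_im, Complex.add_im]
  ring

lemma psi_integrable (σ a : ℝ) (hσ : 1 ≤ σ) :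
    Integrable (fun t : ℝ => Complex.exp ((t : ℂ) * (a * Complex.I)) / ((σ:ℂ) + t * Complex.I)^2) := by
  have hσ0 : (0:ℝ) < σ := lt_of_lt_of_le one_pos hσ
  refine integrable_inv_one_add_sq.mono' ?_ ?_
  · apply Continuous.aestronglyMeasurable
    apply Continuous.div
    · fun_prop
    · fun_prop
    · exact fun t => pow_ne_zero 2 (cne σ hσ0 t)
  · refine Filter.Eventually.of_forall (fun t => ?_)
    rw [norm_div, norm_pow]
    have h1 : ‖Complex.exp ((t : ℂ) * (a * Complex.I))‖ = 1 := by
      have : (t : ℂ) * (a * Complex.I) = ((t * a : ℝ) : ℂ) * Complex.I := by push_cast; ring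
      rw [this]
      exact Complex.norm_exp_ofReal_mul_I (t * a)
    rw [h1]
    have h2 : ‖(σ:ℂ) + t * Complex.I‖^2 = σ^2 + t^2 := by
      rw [Complex.sq_norm, Complex.normSq_add_mul_I]
    rw [h2]
    have h3 : (1:ℝ) + t^2 ≤ σ^2 + t^2 := by nlinarith
    rw [one_div]
    exact inv_anti₀ (by positivity) h3

lemma main_ne (σ a : ℝ) (hσ : 1 < σ) (ha : a ≠ 0) :
    Filter.Tendsto (fun T : ℝ => ∫ t in (-T)..T,
        (σ * Real.cos (t * a) + t * Real.sin (t * a)) / (σ^2 + t^2)) atTop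
      (𝓝 (2 * π * (max a 0 / a) * Real.exp (-σ * max a 0))) := by
  have hσ1 : (1:ℝ) ≤ σ := le_of_lt hσ
  have hσ0 : (0:ℝ) < σ := lt_trans one_pos hσ
  set G : ℝ → ℂ := fun t => Complex.exp ((t : ℂ) * (a * Complex.I)) / ((σ:ℂ) + t * Complex.I)
    with hG
  set ψ : ℝ → ℂ := fun t => Complex.exp ((t : ℂ) * (a * Complex.I)) / ((σ:ℂ) + t * Complex.I)^2
    with hψ
  set u : ℝ → ℂ := fun t => (Complex.I * a)⁻¹ * Complex.exp ((t : ℂ) * (a * Complex.I)) with hu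
  set v : ℝ → ℂ := fun t => ((σ:ℂ) + t * Complex.I)⁻¹ with hv
  have haC : (Complex.I * a) ≠ 0 := by
    exact mul_ne_zero Complex.I_ne_zero (Complex.ofReal_ne_zero.mpr ha)
  have hGcont : Continuous G := by
    apply Continuous.div
    · fun_prop
    · fun_prop
    · exact fun t => cne σ hσ0 t
  -- derivatives
  have hdu : ∀ t : ℝ, HasDerivAt u (Complex.exp ((t : ℂ) * (a * Complex.I))) t := by
    intro t
    have h2 : HasDerivAt (fun z : ℂ => Complex.exp (z * (a * Complex.I)))
        ((a * Complex.I) * Complex.exp ((t:ℂ) * (a * Complex.I))) (t : ℂ) := by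
      have := ((hasDerivAt_id ((t:ℂ))).mul_const ((a:ℂ) * Complex.I)).cexp
      simp only [id_eq] at this
      refine this.congr_deriv (Eq.symm ?_)
      ring
    have := (h2.comp_ofReal).const_mul ((Complex.I * (a:ℂ))⁻¹)
    refine this.congr_deriv (Eq.symm ?_)
    field_simp
    rw [div_self (Complex.ofReal_ne_zero.mpr ha)]
  have hdv : ∀ t : ℝ, HasDerivAt v (-(Complex.I) / ((σ:ℂ) + t * Complex.I)^2) t := by
    intro t
    have h2 : HasDerivAt (fun z : ℂ => (σ:ℂ) + z * Complex.I) Complex.I (t:ℂ) := by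
      have := ((hasDerivAt_id ((t:ℂ))).mul_const Complex.I).const_add (σ:ℂ)
      simpa using this
    have h3 : HasDerivAt (fun z : ℂ => ((σ:ℂ) + z * Complex.I)⁻¹)
        (-(Complex.I) / ((σ:ℂ) + t * Complex.I)^2) (t:ℂ) := h2.inv (cne σ hσ0 t)
    exact h3.comp_ofReal
  have hIBP : ∀ T : ℝ, ∫ t in (-T)..T, G t
      = u T * v T - u (-T) * v (-T) + (a:ℂ)⁻¹ * ∫ t in (-T)..T, ψ t := by
    intro T
    have hu' : IntervalIntegrable (fun t : ℝ => Complex.exp ((t : ℂ) * (a * Complex.I)))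
        volume (-T) T := by
      apply Continuous.intervalIntegrable; fun_prop
    have hv' : IntervalIntegrable (fun t : ℝ => -(Complex.I) / ((σ:ℂ) + t * Complex.I)^2)
        volume (-T) T := by
      apply Continuous.intervalIntegrable
      refine Continuous.div (by fun_prop) (by fun_prop)
        (fun t => pow_ne_zero 2 (cne σ hσ0 t))
    have h := intervalIntegral.integral_mul_deriv_eq_deriv_mul
      (u := u) (v := v) (u' := fun t => Complex.exp ((t : ℂ) * (a * Complex.I)))
      (v' := fun t => -(Complex.I) / ((σ:ℂ) + t * Complex.I)^2)
      (fun x _ => hdu x) (fun x _ => hdv x) hu' hv'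
    have e1 : ∀ t : ℝ, u t * (-(Complex.I) / ((σ:ℂ) + t * Complex.I)^2) = -((a:ℂ)⁻¹ * ψ t) := by
      intro t
      have hc : ((Complex.I * (a:ℂ))⁻¹) * (-(Complex.I)) = -((a:ℂ)⁻¹) := by
        rw [mul_inv_rev]
        have h0 : (Complex.I)⁻¹ * Complex.I = 1 := inv_mul_cancel₀ Complex.I_ne_zero
        calc ((a:ℂ))⁻¹ * (Complex.I)⁻¹ * (-(Complex.I))
            = -(((a:ℂ))⁻¹ * ((Complex.I)⁻¹ * Complex.I)) := by ring
          _ = -((a:ℂ)⁻¹) := by rw [h0, mul_one]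
      calc u t * (-(Complex.I) / ((σ:ℂ) + t * Complex.I)^2)
          = (((Complex.I * (a:ℂ))⁻¹) * (-(Complex.I)))
            * (Complex.exp ((t : ℂ) * (a * Complex.I)) / ((σ:ℂ) + t * Complex.I)^2) := by
            rw [hu]; ring
        _ = -((a:ℂ)⁻¹ * ψ t) := by rw [hc, hψ]; ring
    have e2 : ∀ t : ℝ, Complex.exp ((t : ℂ) * (a * Complex.I)) * v t = G t := by
      intro t
      rw [hv, hG]
      simp only []
      rw [div_eq_mul_inv]
    rw [intervalIntegral.integral_congr (fun t _ => e1 t),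
      intervalIntegral.integral_congr (fun t _ => e2 t)] at h
    rw [intervalIntegral.integral_neg, intervalIntegral.integral_const_mul] at h
    linear_combination h
  have hB : Filter.Tendsto (fun T : ℝ => u T * v T - u (-T) * v (-T)) atTop (𝓝 0) := by
    have hnu : ∀ t : ℝ, ‖u t‖ = |a|⁻¹ := by
      intro t
      rw [hu]
      simp only [norm_mul, norm_inv]
      have h1 : ‖Complex.exp ((t : ℂ) * (a * Complex.I))‖ = 1 := by
        have : (t : ℂ) * (a * Complex.I) = ((t * a : ℝ) : ℂ) * Complex.I := by push_cast; ring
        rw [this]; exact Complex.norm_exp_ofReal_mul_I (t * a)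
      rw [h1]
      simp
    have hnv : ∀ t : ℝ, t ≠ 0 → ‖v t‖ ≤ |t|⁻¹ := by
      intro t ht
      rw [hv]
      simp only [norm_inv]
      apply inv_anti₀ (abs_pos.mpr ht)
      have := Complex.abs_im_le_norm ((σ:ℂ) + t * Complex.I)
      simpa using this
    apply squeeze_zero_norm' (a := fun T : ℝ => 2 * (|a|⁻¹ * T⁻¹))
    · filter_upwards [eventually_ge_atTop (1:ℝ)] with T hT
      have hT0 : (0:ℝ) < T := lt_of_lt_of_le one_pos hT
      have h1 : ‖u T * v T‖ ≤ |a|⁻¹ * T⁻¹ := by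
        rw [norm_mul, hnu]
        have := hnv T (ne_of_gt hT0)
        rw [abs_of_pos hT0] at this
        exact mul_le_mul_of_nonneg_left this (by positivity)
      have h2 : ‖u (-T) * v (-T)‖ ≤ |a|⁻¹ * T⁻¹ := by
        rw [norm_mul, hnu]
        have := hnv (-T) (by simpa using ne_of_gt hT0)
        rw [abs_neg, abs_of_pos hT0] at this
        exact mul_le_mul_of_nonneg_left this (by positivity)
      calc ‖u T * v T - u (-T) * v (-T)‖ ≤ ‖u T * v T‖ + ‖u (-T) * v (-T)‖ := norm_sub_le _ _
        _ ≤ 2 * (|a|⁻¹ * T⁻¹) := by linarith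
    · have := tendsto_inv_atTop_zero.const_mul (2 * |a|⁻¹)
      simp only [mul_zero] at this
      apply this.congr
      intro T
      ring
  have hψT : Filter.Tendsto (fun T : ℝ => ∫ t in (-T)..T, ψ t) atTop
      (𝓝 ((2 * π * hfun σ a : ℂ))) := by
    have := MeasureTheory.intervalIntegral_tendsto_integral (psi_integrable σ a hσ1)
      tendsto_neg_atTop_atBot tendsto_id
    rwa [fourier_key σ a hσ1] at this
  have hGlim : Filter.Tendsto (fun T : ℝ => ∫ t in (-T)..T, G t) atTop
      (𝓝 ((a:ℂ)⁻¹ * (2 * π * hfun σ a))) := by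
    have h := hB.add (hψT.const_mul ((a:ℂ)⁻¹))
    rw [zero_add] at h
    exact h.congr (fun T => (hIBP T).symm)
  have hre : Filter.Tendsto (fun T : ℝ => (∫ t in (-T)..T, G t).re) atTop
      (𝓝 (((a:ℂ)⁻¹ * (2 * π * hfun σ a)).re)) :=
    (Complex.continuous_re.tendsto _).comp hGlim
  have heq : ∀ T : ℝ, (∫ t in (-T)..T, G t).re
      = ∫ t in (-T)..T, (σ * Real.cos (t * a) + t * Real.sin (t * a)) / (σ^2 + t^2) := by
    intro T
    have h0 : (∫ t in (-T)..T, G t).re = ∫ t in (-T)..T, (G t).re :=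
      (ContinuousLinearMap.intervalIntegral_comp_comm Complex.reCLM
        (hGcont.intervalIntegrable _ _)).symm
    rw [h0]
    refine intervalIntegral.integral_congr (fun t _ => ?_)
    have := aux_re σ a t
    simpa [hG] using this
  have hval : (((a:ℂ)⁻¹ * (2 * π * hfun σ a)).re)
      = 2 * π * (max a 0 / a) * Real.exp (-σ * max a 0) := by
    have : ((a:ℂ)⁻¹ * (2 * π * hfun σ a))
        = ((a⁻¹ * (2 * π * (max a 0 * Real.exp (-σ * max a 0))) : ℝ) : ℂ) := by
      rw [hfun]
      push_cast
      ring
    rw [this, Complex.ofReal_re]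
    field_simp
  rw [← hval]
  exact hre.congr heq

lemma main_eq_case (σ : ℝ) (hσ : 0 < σ) :
    Filter.Tendsto (fun T : ℝ => ∫ t in (-T)..T,
        (σ * Real.cos (t * 0) + t * Real.sin (t * 0)) / (σ^2 + t^2)) atTop (𝓝 π) := by
  have hint : ∀ T : ℝ, ∫ t in (-T)..T, (σ * Real.cos (t * 0) + t * Real.sin (t * 0)) / (σ^2 + t^2)
      = Real.arctan (T / σ) - Real.arctan (-T / σ) := by
    intro T
    have hderiv : ∀ t : ℝ, HasDerivAt (fun s : ℝ => Real.arctan (s / σ))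
        ((σ * Real.cos (t * 0) + t * Real.sin (t * 0)) / (σ^2 + t^2)) t := by
      intro t
      have h1 := (Real.hasDerivAt_arctan (t / σ)).comp t ((hasDerivAt_id t).div_const σ)
      refine h1.congr_deriv (Eq.symm ?_)
      simp only [Real.cos_zero, Real.sin_zero, mul_zero, mul_one, add_zero, id_eq]
      have hσ' : σ ≠ 0 := ne_of_gt hσ
      field_simp
    rw [intervalIntegral.integral_eq_sub_of_hasDerivAt (fun t _ => hderiv t) ?_]
    apply Continuous.intervalIntegrable
    have : ∀ t : ℝ, σ^2 + t^2 ≠ 0 := fun t => by positivity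
    fun_prop (disch := exact fun t => by positivity)
  have h1 : Filter.Tendsto (fun T : ℝ => Real.arctan (T / σ)) atTop (𝓝 (π/2)) := by
    refine (Real.tendsto_arctan_atTop.mono_right nhdsWithin_le_nhds).comp ?_
    exact Filter.tendsto_id.atTop_div_const hσ
  have h2 : Filter.Tendsto (fun T : ℝ => Real.arctan (-T / σ)) atTop (𝓝 (-(π/2))) := by
    refine (Real.tendsto_arctan_atBot.mono_right nhdsWithin_le_nhds).comp ?_
    apply Filter.Tendsto.atBot_div_const hσ
    exact tendsto_neg_atTop_atBot
  have := h1.sub h2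
  rw [sub_neg_eq_add, add_halves] at this
  exact this.congr (fun T => (hint T).symm)

theorem stmt_14 (σ r : ℝ) (hσ : 1 < σ) (hr : 0 < r) (j : ℕ) (hj : 0 < j) :
    ((j : ℝ) < r →
      Tendsto (fun T : ℝ =>
          ∫ t in (-T)..T,
            (σ * Real.cos (t * Real.log (r / j)) + t * Real.sin (t * Real.log (r / j))) /
              (σ ^ 2 + t ^ 2))
        atTop (nhds (2 * Real.pi * (r / j) ^ (-σ)))) ∧
    (r < (j : ℝ) →
      Tendsto (fun T : ℝ =>
          ∫ t in (-T)..T,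
            (σ * Real.cos (t * Real.log (r / j)) + t * Real.sin (t * Real.log (r / j))) /
              (σ ^ 2 + t ^ 2))
        atTop (nhds 0)) ∧
    ((j : ℝ) = r →
      Tendsto (fun T : ℝ =>
          ∫ t in (-T)..T,
            (σ * Real.cos (t * Real.log (r / j)) + t * Real.sin (t * Real.log (r / j))) /
              (σ ^ 2 + t ^ 2))
        atTop (nhds Real.pi)) := by
  have hj0 : (0:ℝ) < (j:ℝ) := by exact_mod_cast hj
  have hrj : (0:ℝ) < r / j := div_pos hr hj0
  refine ⟨fun hlt => ?_, fun hgt => ?_, fun heq => ?_⟩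
  · -- j < r : a > 0
    set a : ℝ := Real.log (r / j) with ha
    have ha0 : 0 < a := Real.log_pos ((one_lt_div hj0).mpr hlt)
    have := main_ne σ a hσ (ne_of_gt ha0)
    have hmax : max a 0 = a := max_eq_left (le_of_lt ha0)
    rw [hmax, div_self (ne_of_gt ha0)] at this
    have hv : 2 * π * 1 * Real.exp (-σ * a) = 2 * π * (r / j) ^ (-σ) := by
      rw [Real.rpow_def_of_pos hrj, ← ha]
      ring_nf
    rwa [hv] at this
  · -- r < j : a < 0
    set a : ℝ := Real.log (r / j) with ha
    have ha0 : a < 0 := Real.log_neg hrj ((div_lt_one hj0).mpr hgt)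
    have := main_ne σ a hσ (ne_of_lt ha0)
    have hmax : max a 0 = 0 := max_eq_right (le_of_lt ha0)
    rw [hmax] at this
    simpa using this
  · -- j = r
    have h1 : r / (j:ℝ) = 1 := by rw [← heq]; exact div_self (ne_of_gt hj0)
    have h2 : Real.log (r / j) = 0 := by rw [h1, Real.log_one]
    rw [h2]
    exact main_eq_case σ (lt_trans one_pos hσ)
end
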